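/- arXiv:2502.14513 — 2 statements merged into one kernel-verified Lean document; each statement's English description precedes it below -/
import Mathlib

section
/- Let n ≥ 1 and, for each 1 ≤ i ≤ n, let ψ_i : ℝ_{>0} → ℝ_{>0} be a non-increasing function satisfying ψ_i(x) = o(x^{−2}) as x → ∞. Then dim_H (E(ψ₁) × ⋯ × E(ψₙ)) ≤ min_{1≤i≤n} { n − 1 + 2/λ_i }, where λ_i = liminf_{x→∞} (−log ψ_i(x))/(log x). -/
open MeasureTheory Filter Asymptotics
open scoped ENNReal Topology

/-- `E(ψ)`: the set of `x ∈ [0,1]` such that for every `0 < ε < 1` there are infinitely many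
pairs `(p,q) ∈ ℤ × ℕ` (with `q > 0`) satisfying `(1-ε)ψ(q) < |x - p/q| < ψ(q)`. -/
noncomputable def EsetApprox (ψ : ℝ → ℝ) : Set ℝ :=
  ⋂ ε ∈ Set.Ioo (0:ℝ) 1,
    {x ∈ Set.Icc (0:ℝ) 1 |
      {pq : ℤ × ℕ | 0 < pq.2 ∧ (1 - ε) * ψ pq.2 < |x - pq.1 / pq.2| ∧
        |x - pq.1 / pq.2| < ψ pq.2}.Infinite}

/-- `λ(ψ) = liminf_{x → ∞} (-log ψ(x)) / log x`. -/
noncomputable def lamExp (ψ : ℝ → ℝ) : ℝ :=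
  Filter.liminf (fun x : ℝ => -Real.log (ψ x) / Real.log x) Filter.atTop

/-- Index type for the covers. -/
abbrev RIdx (n : ℕ) (i₀ : Fin n) : Type := ℕ × ℤ × Bool × ({j : Fin n // j ≠ i₀} → ℕ)

/-- A basic cube of the cover: for index `(q, p, b, m)` with `q ≥ Q₀`, points `x` of `[0,1]^n`
whose `i₀`-th coordinate lies in the `b`-side annulus piece around `p/q` and whose other
coordinates lie in the grid box determined by `m`, of mesh `e * ψ0 q`. -/
noncomputable def cubeSet (n : ℕ) (i₀ : Fin n) (ψ0 : ℝ → ℝ) (Q₀ : ℕ) (e : ℝ)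
    (idx : RIdx n i₀) : Set (Fin n → ℝ) :=
  if Q₀ ≤ idx.1 then
    {x | (∀ j, x j ∈ Set.Icc (0:ℝ) 1) ∧
      (x i₀ - (idx.2.1 : ℝ) / (idx.1 : ℝ)) ∈
        (if idx.2.2.1 then Set.Icc ((1 - e) * ψ0 idx.1) (ψ0 idx.1)
         else Set.Icc (-(ψ0 idx.1)) (-((1 - e) * ψ0 idx.1))) ∧
      ∀ (j : Fin n) (h : j ≠ i₀),
        x j ∈ Set.Icc ((idx.2.2.2 ⟨j, h⟩ : ℝ) * (e * ψ0 idx.1))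
          (((idx.2.2.2 ⟨j, h⟩ : ℝ) + 1) * (e * ψ0 idx.1))}
  else ∅

lemma finite_int_cast_Icc (a b : ℝ) : {p : ℤ | (p:ℝ) ∈ Set.Icc a b}.Finite := by
  apply (Set.finite_Icc (⌈a⌉) (⌊b⌋)).subset
  intro p hp
  exact ⟨Int.ceil_le.2 hp.1, Int.le_floor.2 hp.2⟩


lemma abs_sub_le_of_mem_Icc {A B u v : ℝ} (hu : u ∈ Set.Icc A B) (hv : v ∈ Set.Icc A B) :
    |u - v| ≤ B - A := by
  rw [abs_sub_le_iff]
  constructor <;>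
    · obtain ⟨h1, h2⟩ := hu; obtain ⟨h3, h4⟩ := hv; linarith


lemma diam_cubeSet_le (n : ℕ) (i₀ : Fin n) (ψ0 : ℝ → ℝ) (Q₀ : ℕ) (e : ℝ)
    (idx : RIdx n i₀) (w : ℝ) (hw : Q₀ ≤ idx.1 → e * ψ0 idx.1 ≤ w) :
    EMetric.diam (cubeSet n i₀ ψ0 Q₀ e idx) ≤ ENNReal.ofReal w := by
  obtain ⟨q, p, b, m⟩ := idx
  rw [cubeSet]
  by_cases hq : Q₀ ≤ (q, p, b, m).1
  case neg => rw [if_neg hq]; simp [EMetric.diam]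
  rw [if_pos hq]
  · apply EMetric.diam_le
    intro x hx y hy
    rw [edist_pi_def]
    apply Finset.sup_le
    intro j _
    rw [edist_dist, Real.dist_eq]
    apply ENNReal.ofReal_le_ofReal
    refine le_trans ?_ (hw hq)
    obtain ⟨hx1, hx2, hx3⟩ := hx
    obtain ⟨hy1, hy2, hy3⟩ := hy
    by_cases hj : j = i₀
    · subst hj
      have heq : |x j - y j| = |(x j - (p : ℝ) / (q : ℝ)) - (y j - (p : ℝ) / (q : ℝ))| := by
        congr 1; ring
      rw [heq]
      cases b
      · simp only [Bool.false_eq_true, if_false] at hx2 hy2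
        have := abs_sub_le_of_mem_Icc hx2 hy2
        calc |(x j - (p:ℝ)/(q:ℝ)) - (y j - (p:ℝ)/(q:ℝ))|
            ≤ -((1 - e) * ψ0 q) - -(ψ0 q) := this
          _ = e * ψ0 q := by ring
      · simp only [if_true] at hx2 hy2
        have := abs_sub_le_of_mem_Icc hx2 hy2
        calc |(x j - (p:ℝ)/(q:ℝ)) - (y j - (p:ℝ)/(q:ℝ))|
            ≤ ψ0 q - (1 - e) * ψ0 q := this
          _ = e * ψ0 q := by ring
    · have := abs_sub_le_of_mem_Icc (hx3 j hj) (hy3 j hj)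
      calc |x j - y j| ≤ ((m ⟨j, hj⟩ : ℝ) + 1) * (e * ψ0 q) - (m ⟨j, hj⟩ : ℝ) * (e * ψ0 q) := this
        _ = e * ψ0 q := by ring


lemma cubeSet_nonempty_constraints (n : ℕ) (i₀ : Fin n) (ψ0 : ℝ → ℝ) (Q₀ : ℕ)
    {e : ℝ} (he0 : 0 < e) (he1 : e ≤ 1) {q : ℕ} {p : ℤ} {b : Bool}
    {m : {j : Fin n // j ≠ i₀} → ℕ} (hq1 : 1 ≤ q)
    (hψpos : 0 < ψ0 q) (hψ1 : ψ0 q ≤ 1)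
    (h : (cubeSet n i₀ ψ0 Q₀ e (q, p, b, m)).Nonempty) :
    Q₀ ≤ q ∧ p ∈ Finset.Icc (-(q:ℤ)) (2*(q:ℤ)) ∧
      ∀ jh, m jh < Nat.floor (e * ψ0 q)⁻¹ + 1 := by
  obtain ⟨x, hx⟩ := h
  rw [cubeSet] at hx
  by_cases hq : Q₀ ≤ (q, p, b, m).1
  swap
  · rw [if_neg hq] at hx; exact absurd hx (Set.notMem_empty x)
  rw [if_pos hq] at hx
  obtain ⟨hIcc, hside, hbox⟩ := hx
  have hq0 : (0:ℝ) < (q:ℝ) := by exact_mod_cast hq1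
  have hℓ : 0 < e * ψ0 q := mul_pos he0 hψpos
  have hd : x i₀ - (p:ℝ)/(q:ℝ) ∈ Set.Icc (-(ψ0 q)) (ψ0 q) := by
    rcases b with _ | _
    · simp only [Bool.false_eq_true, if_false] at hside
      exact ⟨hside.1, le_trans hside.2 (by nlinarith)⟩
    · simp only [if_true] at hside
      exact ⟨le_trans (by nlinarith) hside.1, hside.2⟩
  have hx0 : (0:ℝ) ≤ x i₀ := (hIcc i₀).1
  have hx1 : x i₀ ≤ 1 := (hIcc i₀).2
  refine ⟨hq, ?_, ?_⟩
  · rw [Finset.mem_Icc]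
    constructor
    · have h1 : (-1 : ℝ) ≤ (p:ℝ)/(q:ℝ) := by
        have := hd.2; linarith
      have h2 : (-1:ℝ) * (q:ℝ) ≤ (p:ℝ) := (le_div_iff₀ hq0).mp h1
      have h3 : ((-(q:ℤ)):ℝ) ≤ (p:ℝ) := by push_cast; linarith
      exact_mod_cast h3
    · have : (p:ℝ)/(q:ℝ) ≤ 2 := by
        have := hd.1; linarith
      rw [div_le_iff₀ hq0] at this
      have h2 : (p:ℝ) ≤ ((2 * q : ℤ) : ℝ) := by push_cast; linarith
      exact_mod_cast h2
  · intro jh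
    have hb := hbox jh.1 jh.2
    have hxj1 : x jh.1 ≤ 1 := (hIcc jh.1).2
    have hm : (m jh : ℝ) ≤ (e * ψ0 q)⁻¹ := by
      rw [← one_div, le_div_iff₀ hℓ]
      have : (m ⟨jh.1, jh.2⟩ : ℝ) * (e * ψ0 q) ≤ x jh.1 := hb.1
      calc (m jh : ℝ) * (e * ψ0 q) = (m ⟨jh.1, jh.2⟩ : ℝ) * (e * ψ0 q) := by rfl
        _ ≤ x jh.1 := this
        _ ≤ 1 := hxj1
    have := Nat.le_floor hm
    omega


lemma pi_subset_iUnion_cubeSet (n : ℕ) (i₀ : Fin n) (ψ : Fin n → ℝ → ℝ)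
    (hψpos : ∀ y : ℝ, 0 < y → 0 < ψ i₀ y) (Q₀ : ℕ) {e : ℝ} (he : e ∈ Set.Ioo (0:ℝ) 1) :
    (Set.pi Set.univ fun i => EsetApprox (ψ i)) ⊆
      ⋃ idx : RIdx n i₀, cubeSet n i₀ (ψ i₀) Q₀ e idx := by
  intro x hx
  rw [Set.mem_univ_pi] at hx
  -- coordinates are in [0,1]
  have hIcc : ∀ j, x j ∈ Set.Icc (0:ℝ) 1 := by
    intro j
    have := hx j
    rw [EsetApprox, Set.mem_iInter₂] at this
    exact (this (1/2) (by norm_num)).1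
  -- the infinite set of good pairs for coordinate i₀ at parameter e
  have hP : {pq : ℤ × ℕ | 0 < pq.2 ∧ (1 - e) * ψ i₀ pq.2 < |x i₀ - pq.1 / pq.2| ∧
      |x i₀ - pq.1 / pq.2| < ψ i₀ pq.2}.Infinite := by
    have := hx i₀
    rw [EsetApprox, Set.mem_iInter₂] at this
    exact (this e he).2
  set P := {pq : ℤ × ℕ | 0 < pq.2 ∧ (1 - e) * ψ i₀ pq.2 < |x i₀ - pq.1 / pq.2| ∧
      |x i₀ - pq.1 / pq.2| < ψ i₀ pq.2} with hPdef
  -- pairs with small denominator form a finite set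
  have hfin : (P ∩ {pq : ℤ × ℕ | pq.2 < Q₀}).Finite := by
    have hsub : (P ∩ {pq : ℤ × ℕ | pq.2 < Q₀}) ⊆
        ⋃ q ∈ Set.Iio Q₀, (fun p : ℤ => (p, q)) ''
          {p : ℤ | (p:ℝ) ∈ Set.Icc (-((q:ℝ) * (1 + ψ i₀ q))) ((q:ℝ) * (1 + ψ i₀ q))} := by
      rintro ⟨p, q⟩ ⟨⟨hq0, _, hu⟩, hlt⟩
      simp only [Set.mem_iUnion₂, Set.mem_image, Set.mem_setOf_eq]
      refine ⟨q, hlt, p, ?_, rfl⟩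
      have hqr : (0:ℝ) < (q:ℝ) := by exact_mod_cast hq0
      have hx0 := (hIcc i₀).1
      have hx1 := (hIcc i₀).2
      have habs : |(p:ℝ)/(q:ℝ)| ≤ 1 + ψ i₀ q := by
        have h1 : |(p:ℝ)/(q:ℝ)| ≤ |(p:ℝ)/(q:ℝ) - x i₀| + |x i₀| := by
          have := abs_sub_abs_le_abs_sub ((p:ℝ)/(q:ℝ)) (x i₀)
          have := abs_add_le ((p:ℝ)/(q:ℝ) - x i₀) (x i₀)
          calc |(p:ℝ)/(q:ℝ)| = |((p:ℝ)/(q:ℝ) - x i₀) + x i₀| := by ring_nf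
            _ ≤ |(p:ℝ)/(q:ℝ) - x i₀| + |x i₀| := abs_add_le _ _
        have h2 : |(p:ℝ)/(q:ℝ) - x i₀| = |x i₀ - (p:ℝ)/(q:ℝ)| := abs_sub_comm _ _
        have h3 : |x i₀| ≤ 1 := by rw [abs_of_nonneg hx0]; exact hx1
        calc |(p:ℝ)/(q:ℝ)| ≤ |x i₀ - (p:ℝ)/(q:ℝ)| + |x i₀| := by rw [← h2]; exact h1
          _ ≤ ψ i₀ q + 1 := add_le_add hu.le h3
          _ = 1 + ψ i₀ q := by ring
      have := (abs_le.1 habs)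
      rw [abs_div, abs_of_pos hqr] at habs
      have hp : |(p:ℝ)| ≤ (q:ℝ) * (1 + ψ i₀ q) := by
        rw [div_le_iff₀ hqr] at habs; linarith [habs]
      have := abs_le.1 hp
      exact ⟨by linarith [this.1], this.2⟩
    apply Set.Finite.subset _ hsub
    apply Set.Finite.biUnion (Set.finite_Iio Q₀)
    intro q _
    exact (finite_int_cast_Icc _ _).image _
  obtain ⟨⟨p, q⟩, hmem, hnot⟩ := (hP.diff hfin).nonempty
  have hpqP : (p, q) ∈ P := hmem
  have hq : Q₀ ≤ q := by
    by_contra hc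
    exact hnot ⟨hmem, by simpa using Nat.lt_of_not_le hc⟩
  obtain ⟨hq0, hlow, hup⟩ := hpqP
  have hqr : (0:ℝ) < (q:ℝ) := by exact_mod_cast hq0
  have hψq : 0 < ψ i₀ q := hψpos _ hqr
  have hℓ : 0 < e * ψ i₀ q := mul_pos he.1 hψq
  set ℓ := e * ψ i₀ q with hℓdef
  have hbox : ∀ (j : Fin n) (h : j ≠ i₀),
      x j ∈ Set.Icc ((⌊x j / ℓ⌋₊ : ℝ) * ℓ) ((↑(⌊x j / ℓ⌋₊) + 1) * ℓ) := by
    intro j hj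
    have hxj0 := (hIcc j).1
    constructor
    · have := Nat.floor_le (div_nonneg hxj0 hℓ.le)
      calc (⌊x j / ℓ⌋₊ : ℝ) * ℓ ≤ (x j / ℓ) * ℓ := by
            apply mul_le_mul_of_nonneg_right this hℓ.le
        _ = x j := by field_simp
    · have := Nat.lt_floor_add_one (x j / ℓ)
      have h2 : x j / ℓ * ℓ ≤ ((⌊x j / ℓ⌋₊ : ℝ) + 1) * ℓ := by
        apply mul_le_mul_of_nonneg_right this.le hℓ.le
      calc x j = x j / ℓ * ℓ := by field_simp
        _ ≤ ((⌊x j / ℓ⌋₊ : ℝ) + 1) * ℓ := h2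
  set m : {j : Fin n // j ≠ i₀} → ℕ := fun jh => ⌊x jh.1 / ℓ⌋₊ with hmdef
  rw [Set.mem_iUnion]
  rcases le_or_gt 0 (x i₀ - (p:ℝ)/(q:ℝ)) with hd | hd
  · refine ⟨(q, p, true, m), ?_⟩
    rw [cubeSet, if_pos hq]
    refine ⟨hIcc, ?_, fun j hj => hbox j hj⟩
    simp only [if_true]
    rw [abs_of_nonneg hd] at hlow hup
    exact ⟨hlow.le, hup.le⟩
  · refine ⟨(q, p, false, m), ?_⟩
    rw [cubeSet, if_pos hq]
    refine ⟨hIcc, ?_, fun j hj => hbox j hj⟩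
    simp only [Bool.false_eq_true, if_false]
    rw [abs_of_neg hd] at hlow hup
    exact ⟨by linarith, by linarith⟩


lemma card_ne_subtype (n : ℕ) (i₀ : Fin n) : Fintype.card {j : Fin n // j ≠ i₀} = n - 1 := by
  simp [Fintype.card_subtype_compl]


lemma tsum_cubeSet_le (n : ℕ) (hn : 1 ≤ n) (i₀ : Fin n) (ψ0 : ℝ → ℝ) (Q₀ : ℕ)
    (hQ₀ : 1 ≤ Q₀)
    (hψpos : ∀ q : ℕ, 1 ≤ q → 0 < ψ0 q)
    (hψ1 : ∀ q : ℕ, Q₀ ≤ q → ψ0 q ≤ 1)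
    (lam : ℝ) (hψq : ∀ q : ℕ, Q₀ ≤ q → ψ0 q ≤ (q:ℝ) ^ (-lam))
    {e : ℝ} (he : e ∈ Set.Ioo (0:ℝ) 1) {s t : ℝ} (ht : 0 < t)
    (hst : s = ((n - 1 : ℕ) : ℝ) + t) :
    ∑' idx : RIdx n i₀, EMetric.diam (cubeSet n i₀ ψ0 Q₀ e idx) ^ s ≤
      ENNReal.ofReal ((8 * 2 ^ (n-1)) * e ^ t) *
        ∑' q : ℕ, ENNReal.ofReal ((q:ℝ) ^ (1 - lam * t)) := by
  have hs0 : 0 < s := by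
    rw [hst]; have : (0:ℝ) ≤ ((n-1:ℕ):ℝ) := Nat.cast_nonneg _
    linarith
  have hperq : ∀ q : ℕ,
      (∑' r : ℤ × Bool × ({j : Fin n // j ≠ i₀} → ℕ),
        EMetric.diam (cubeSet n i₀ ψ0 Q₀ e (q, r)) ^ s) ≤
      ENNReal.ofReal ((8 * 2 ^ (n-1)) * e ^ t) * ENNReal.ofReal ((q:ℝ) ^ (1 - lam * t)) := by
    intro q
    by_cases hq : Q₀ ≤ q
    · have hq1 : 1 ≤ q := le_trans hQ₀ hq
      have hq0 : (0:ℝ) < (q:ℝ) := by exact_mod_cast hq1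
      have hψp := hψpos q hq1
      have hψle1 := hψ1 q hq
      set ℓ := e * ψ0 q with hℓdef
      have hℓ : 0 < ℓ := mul_pos he.1 hψp
      have hℓ1 : ℓ ≤ 1 := by nlinarith [he.1, he.2, hψp]
      set K := Nat.floor ℓ⁻¹ + 1 with hKdef
      have hKl : (K:ℝ) * ℓ ≤ 2 := by
        have h1 : (Nat.floor ℓ⁻¹ : ℝ) ≤ ℓ⁻¹ := Nat.floor_le (by positivity)
        have hinv : (0:ℝ) < ℓ⁻¹ := by positivity
        have h3 : ℓ⁻¹ * ℓ = 1 := inv_mul_cancel₀ hℓ.ne'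
        have h2 : (1:ℝ) ≤ ℓ⁻¹ := by nlinarith
        have hK : (K:ℝ) ≤ 2 * ℓ⁻¹ := by push_cast [hKdef]; linarith
        calc (K:ℝ) * ℓ ≤ (2 * ℓ⁻¹) * ℓ := by nlinarith
          _ = 2 := by field_simp
      have hwl : e * ψ0 q ≤ ℓ := le_of_eq hℓdef.symm
      clear_value K
      set F : Finset (ℤ × Bool × ({j : Fin n // j ≠ i₀} → ℕ)) :=
        (Finset.Icc (-(q:ℤ)) (2*(q:ℤ))) ×ˢ
          ((Finset.univ : Finset Bool) ×ˢ Fintype.piFinset fun _ => Finset.range K) with hFdef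
      have hzero : ∀ r ∉ F,
          EMetric.diam (cubeSet n i₀ ψ0 Q₀ e (q, r)) ^ s = 0 := by
        rintro ⟨p, b, m⟩ hr
        rcases Set.eq_empty_or_nonempty (cubeSet n i₀ ψ0 Q₀ e (q, p, b, m)) with hE | hNE
        · rw [hE]; simp [EMetric.diam, ENNReal.zero_rpow_of_pos hs0]
        · exfalso
          obtain ⟨_, hpF, hmF⟩ := cubeSet_nonempty_constraints n i₀ ψ0 Q₀ he.1 he.2.le
            hq1 hψp hψle1 hNE
          apply hr
          rw [hFdef]
          simp only [Finset.mem_product, Fintype.mem_piFinset, Finset.mem_range,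
            Finset.mem_univ, true_and]
          exact ⟨hpF, fun jh => by rw [hKdef, hℓdef]; exact hmF jh⟩
      rw [tsum_eq_sum hzero]
      have hbound : ∀ r ∈ F, EMetric.diam (cubeSet n i₀ ψ0 Q₀ e (q, r)) ^ s ≤
          (ENNReal.ofReal ℓ) ^ s :=
        fun r _ => ENNReal.rpow_le_rpow
          (diam_cubeSet_le n i₀ ψ0 Q₀ e (q, r) ℓ (fun _ => hwl)) hs0.le
      refine le_trans (Finset.sum_le_card_nsmul F _ _ hbound) ?_
      clear_value ℓ
      have hcard : F.card = (3*q+1) * (2 * K^(n-1)) := by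
        rw [hFdef, Finset.card_product, Finset.card_product, Fintype.card_piFinset]
        simp only [Finset.card_range, Finset.prod_const, Finset.card_univ, card_ne_subtype,
          Finset.card_univ, Fintype.card_bool, Int.card_Icc]
        congr 1
        omega
      rw [nsmul_eq_mul, hcard]
      have e1 : ((((3*q+1) * (2 * K^(n-1)) : ℕ)) : ℝ≥0∞) * ENNReal.ofReal ℓ ^ s
          = ENNReal.ofReal (((((3*q+1) * (2 * K^(n-1)) : ℕ)) : ℝ) * ℓ ^ s) := by
        rw [ENNReal.ofReal_rpow_of_pos hℓ, ← ENNReal.ofReal_natCast,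
          ← ENNReal.ofReal_mul (Nat.cast_nonneg _)]
      have e2 : ENNReal.ofReal ((8 * 2 ^ (n-1)) * e ^ t) * ENNReal.ofReal ((q:ℝ) ^ (1 - lam * t))
          = ENNReal.ofReal (((8 * 2 ^ (n-1)) * e ^ t) * ((q:ℝ) ^ (1 - lam * t))) := by
        rw [← ENNReal.ofReal_mul (mul_nonneg (by positivity) (Real.rpow_nonneg he.1.le t))]
      rw [e1, e2]
      apply ENNReal.ofReal_le_ofReal
      -- the real inequality
      have hψt : ψ0 q ^ t ≤ (q:ℝ) ^ (-(lam*t)) := by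
        have h1 : ψ0 q ^ t ≤ ((q:ℝ) ^ (-lam)) ^ t :=
          Real.rpow_le_rpow hψp.le (hψq q hq) ht.le
        rwa [← Real.rpow_mul hq0.le, neg_mul] at h1
      have hℓs : ℓ ^ s = ℓ^(n-1 : ℕ) * ℓ^t := by
        rw [hst, Real.rpow_add hℓ, Real.rpow_natCast]
      have hℓt : ℓ ^ t = e^t * ψ0 q ^ t := by rw [hℓdef]; exact Real.mul_rpow he.1.le hψp.le
      have hA : (3*(q:ℝ)+1) * 2 * (((K:ℝ)*ℓ)^(n-1)) ≤ (4*(q:ℝ)) * 2 * 2^(n-1) := by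
        have h1 : ((K:ℝ)*ℓ)^(n-1) ≤ 2^(n-1) := pow_le_pow_left₀ (by positivity) hKl _
        have h2 : (3*(q:ℝ)+1) ≤ 4*(q:ℝ) := by
          have : (1:ℝ) ≤ (q:ℝ) := by exact_mod_cast hq1
          linarith
        have h3 : (0:ℝ) ≤ ((K:ℝ)*ℓ)^(n-1) := by positivity
        calc (3*(q:ℝ)+1) * 2 * (((K:ℝ)*ℓ)^(n-1))
            = 2 * ((3*(q:ℝ)+1) * ((K:ℝ)*ℓ)^(n-1)) := by ring
          _ ≤ 2 * ((4*(q:ℝ)) * 2^(n-1)) := by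
              apply mul_le_mul_of_nonneg_left
                (mul_le_mul h2 h1 h3 (by positivity)) (by norm_num)
          _ = 4*(q:ℝ) * 2 * 2^(n-1) := by ring
      have het : (0:ℝ) ≤ e^t := Real.rpow_nonneg he.1.le t
      have hpt : (0:ℝ) ≤ ψ0 q ^ t := Real.rpow_nonneg hψp.le t
      have hB : e^t * ψ0 q ^ t ≤ e^t * (q:ℝ)^(-(lam*t)) := by
        apply mul_le_mul_of_nonneg_left hψt het
      calc ((((3*q+1) * (2 * K^(n-1)) : ℕ)):ℝ) * ℓ ^ s
          = ((3*(q:ℝ)+1) * 2 * (((K:ℝ)*ℓ)^(n-1))) * (e^t * ψ0 q ^ t) := by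
            rw [hℓs, hℓt, mul_pow]
            push_cast
            ring
        _ ≤ ((4*(q:ℝ)) * 2 * 2^(n-1)) * (e^t * (q:ℝ)^(-(lam*t))) := by
            apply mul_le_mul hA hB (mul_nonneg het hpt) (by positivity)
        _ = (8 * 2^(n-1)) * e^t * ((q:ℝ)^(1:ℝ) * (q:ℝ)^(-(lam*t))) := by
            rw [Real.rpow_one]; ring
        _ = (8 * 2^(n-1)) * e^t * (q:ℝ)^(1 - lam*t) := by
            rw [← Real.rpow_add hq0]; ring_nf
        _ = (8 * 2^(n-1) * e^t) * (q:ℝ)^(1 - lam*t) := by ring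
    · have hall : ∀ r : ℤ × Bool × ({j : Fin n // j ≠ i₀} → ℕ),
          cubeSet n i₀ ψ0 Q₀ e (q, r) = ∅ := fun r => if_neg hq
      calc (∑' r : ℤ × Bool × ({j : Fin n // j ≠ i₀} → ℕ),
            EMetric.diam (cubeSet n i₀ ψ0 Q₀ e (q, r)) ^ s)
          = 0 := by
            simp [hall, EMetric.diam, EMetric.diam_empty, ENNReal.zero_rpow_of_pos hs0]
        _ ≤ _ := zero_le
  calc ∑' idx : RIdx n i₀, EMetric.diam (cubeSet n i₀ ψ0 Q₀ e idx) ^ s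
      = ∑' q : ℕ, ∑' r : ℤ × Bool × ({j : Fin n // j ≠ i₀} → ℕ),
          EMetric.diam (cubeSet n i₀ ψ0 Q₀ e (q, r)) ^ s := ENNReal.tsum_prod'
        (f := fun idx => EMetric.diam (cubeSet n i₀ ψ0 Q₀ e idx) ^ s)
    _ ≤ ∑' q : ℕ, ENNReal.ofReal ((8 * 2 ^ (n-1)) * e ^ t) *
          ENNReal.ofReal ((q:ℝ) ^ (1 - lam * t)) := ENNReal.tsum_le_tsum hperq
    _ = _ := ENNReal.tsum_mul_left


lemma exists_exponent (ψ0 : ℝ → ℝ) (hpos : ∀ x : ℝ, 0 < x → 0 < ψ0 x)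
    (hlittle : ψ0 =o[atTop] fun x : ℝ => (x ^ 2)⁻¹) {u : ℝ}
    (hu : 2 / lamExp ψ0 < u) :
    ∃ lam : ℝ, 0 < lam ∧ 2 < lam * u ∧ 0 < u ∧
      ∀ᶠ x : ℝ in atTop, ψ0 x ≤ x ^ (-lam) := by
  set f : ℝ → ℝ := fun x => -Real.log (ψ0 x) / Real.log x with hfdef
  -- from the little-o assumption, eventually `f x ≥ 2`
  have hf2 : ∀ᶠ x : ℝ in atTop, 2 ≤ f x := by
    have hb := hlittle.bound one_pos
    filter_upwards [hb, eventually_gt_atTop (1:ℝ)] with x hx hx1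
    have hx0 : (0:ℝ) < x := lt_trans one_pos hx1
    have hψx : 0 < ψ0 x := hpos x hx0
    have hlog : 0 < Real.log x := Real.log_pos hx1
    have hx2 : (0:ℝ) < x ^ 2 := by positivity
    have hle : ψ0 x ≤ (x ^ 2)⁻¹ := by
      have : ‖ψ0 x‖ ≤ 1 * ‖(x ^ 2)⁻¹‖ := hx
      rwa [Real.norm_eq_abs, Real.norm_eq_abs, one_mul, abs_of_pos hψx,
        abs_of_pos (by positivity)] at this
    have hlog2 : Real.log (ψ0 x) ≤ -(2 * Real.log x) := by
      calc Real.log (ψ0 x) ≤ Real.log ((x ^ 2)⁻¹) := Real.log_le_log hψx hle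
        _ = -(2 * Real.log x) := by
          rw [Real.log_inv, Real.log_pow]; push_cast; ring
    rw [hfdef]
    rw [le_div_iff₀ hlog]
    linarith
  -- a helper to convert an eventual lower bound on `f` into an upper bound on `ψ0`
  have hconv : ∀ lam : ℝ, (∀ᶠ x : ℝ in atTop, lam ≤ f x) →
      ∀ᶠ x : ℝ in atTop, ψ0 x ≤ x ^ (-lam) := by
    intro lam hev
    filter_upwards [hev, eventually_gt_atTop (1:ℝ)] with x hx hx1
    have hx0 : (0:ℝ) < x := lt_trans one_pos hx1
    have hψx : 0 < ψ0 x := hpos x hx0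
    have hlog : 0 < Real.log x := Real.log_pos hx1
    rw [hfdef] at hx
    rw [le_div_iff₀ hlog] at hx
    have h1 : Real.log (ψ0 x) ≤ Real.log (x ^ (-lam)) := by
      rw [Real.log_rpow hx0]
      linarith
    exact (Real.log_le_log_iff hψx (Real.rpow_pos_of_pos hx0 _)).1 h1
  by_cases hcb : IsCoboundedUnder (· ≥ ·) atTop f
  · -- the liminf is an honest liminf, and it is at least 2
    have hL2 : 2 ≤ lamExp ψ0 := le_liminf_of_le hcb hf2
    have hL0 : 0 < lamExp ψ0 := lt_of_lt_of_le two_pos hL2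
    have hu0 : 0 < u := lt_trans (by positivity) hu
    have h2u : 2 / u < lamExp ψ0 := by
      rw [div_lt_iff₀ hu0]
      rw [div_lt_iff₀ hL0] at hu
      linarith [mul_comm u (lamExp ψ0)]
    obtain ⟨lam, hlam1, hlam2⟩ := exists_between h2u
    have hbdd : IsBoundedUnder (· ≥ ·) atTop f := ⟨2, by
      rw [eventually_map]; exact hf2⟩
    have hev := eventually_lt_of_lt_liminf hlam2 hbdd
    refine ⟨lam, ?_, ?_, hu0, hconv lam (hev.mono fun x hx => hx.le)⟩
    · calc (0:ℝ) < 2/u := by positivity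
        _ < lam := hlam1
    · rw [div_lt_iff₀ hu0] at hlam1; linarith [mul_comm lam u]
  · -- degenerate case: `f → ∞`; the liminf equals `sSup ∅ = 0`
    have hL : lamExp ψ0 = 0 := by
      rw [lamExp, liminf_eq, Real.sSup_def]
      rw [dif_neg]
      rintro ⟨hne, hbdd⟩
      exact hcb ⟨hbdd.choose, fun a ha => hbdd.choose_spec ha⟩
    rw [hL] at hu
    simp only [div_zero] at hu
    have hu0 : 0 < u := hu
    rw [Filter.IsCoboundedUnder, Filter.IsCobounded] at hcb
    push_neg at hcb
    obtain ⟨lam, hlam1, hlam2⟩ := hcb (3 / u)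
    have hlam : 3 / u < lam := hlam2
    refine ⟨lam, ?_, ?_, hu0, hconv lam ?_⟩
    · calc (0:ℝ) < 3/u := by positivity
        _ < lam := hlam
    · rw [div_lt_iff₀ hu0] at hlam; nlinarith
    · rw [eventually_map] at hlam1; exact hlam1

lemma key (n : ℕ) (hn : 1 ≤ n) (ψ : Fin n → ℝ → ℝ)
    (hpos : ∀ i, ∀ x : ℝ, 0 < x → 0 < ψ i x)
    (hmono : ∀ i, ∀ x y : ℝ, 0 < x → x ≤ y → ψ i y ≤ ψ i x)
    (hlittle : ∀ i, (ψ i) =o[atTop] fun x : ℝ => (x ^ 2)⁻¹)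
    (i₀ : Fin n) {s : ℝ} (hs : (n : ℝ) - 1 + 2 / lamExp (ψ i₀) < s) :
    μH[s] (Set.pi Set.univ fun i => EsetApprox (ψ i)) = 0 := by
  have hu : 2 / lamExp (ψ i₀) < s - ((n:ℝ) - 1) := by linarith
  obtain ⟨lam, hlam0, hlamu, ht, hev⟩ :=
    exists_exponent (ψ i₀) (hpos i₀) (hlittle i₀) hu
  obtain ⟨X₀, hX₀⟩ := eventually_atTop.1 hev
  set Q₀ : ℕ := max 1 ⌈X₀⌉₊ with hQ₀def
  have hQ₀1 : 1 ≤ Q₀ := le_max_left _ _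
  have hQ₀X : X₀ ≤ (Q₀:ℝ) := by
    refine le_trans (Nat.le_ceil X₀) ?_
    exact_mod_cast le_max_right 1 ⌈X₀⌉₊
  have hψq : ∀ q : ℕ, Q₀ ≤ q → ψ i₀ q ≤ (q:ℝ)^(-lam) := by
    intro q hq
    exact hX₀ q (le_trans hQ₀X (by exact_mod_cast hq))
  have hψ1 : ∀ q : ℕ, Q₀ ≤ q → ψ i₀ q ≤ 1 := by
    intro q hq
    refine le_trans (hψq q hq) ?_
    apply Real.rpow_le_one_of_one_le_of_nonpos
    · exact_mod_cast le_trans hQ₀1 hq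
    · linarith
  have hψposN : ∀ q : ℕ, 1 ≤ q → 0 < ψ i₀ q := by
    intro q hq
    exact hpos i₀ _ (by exact_mod_cast hq)
  have hst : s = ((n - 1 : ℕ):ℝ) + (s - ((n:ℝ) - 1)) := by
    rw [Nat.cast_sub hn]
    push_cast
    ring
  set ε : ℕ → ℝ := fun k => ((k:ℝ)+2)⁻¹ with hεdef
  have hεIoo : ∀ k, ε k ∈ Set.Ioo (0:ℝ) 1 := by
    intro k
    have h2 : (1:ℝ) < (k:ℝ) + 2 := by
      have := Nat.cast_nonneg (α := ℝ) k
      linarith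
    constructor
    · rw [hεdef]; positivity
    · rw [hεdef]
      simpa using inv_lt_one_of_one_lt₀ h2
  have hεlim : Tendsto ε atTop (𝓝 0) := by
    apply Tendsto.inv_tendsto_atTop
    apply tendsto_atTop_add_const_right
    exact tendsto_natCast_atTop_atTop
  set Cov : ℕ → RIdx n i₀ → Set (Fin n → ℝ) :=
    fun k idx => cubeSet n i₀ (ψ i₀) Q₀ (ε k) idx with hCovdef
  set r : ℕ → ℝ≥0∞ := fun k => ENNReal.ofReal (ε k * ψ i₀ Q₀) with hrdef
  have hr : Tendsto r atTop (𝓝 0) := by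
    have h1 : Tendsto (fun k => ε k * ψ i₀ Q₀) atTop (𝓝 (0 * ψ i₀ Q₀)) :=
      hεlim.mul_const _
    rw [zero_mul] at h1
    have := ENNReal.tendsto_ofReal h1
    simpa [hrdef] using this
  have hQ₀r : (0:ℝ) < (Q₀:ℝ) := by exact_mod_cast hQ₀1
  have hdiam : ∀ k idx, EMetric.diam (Cov k idx) ≤ r k := by
    intro k idx
    apply diam_cubeSet_le
    intro hq
    apply mul_le_mul_of_nonneg_left _ (hεIoo k).1.le
    apply hmono i₀ _ _ hQ₀r
    exact_mod_cast hq
  have hcover : ∀ k, (Set.pi Set.univ fun i => EsetApprox (ψ i)) ⊆ ⋃ idx, Cov k idx :=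
    fun k => pi_subset_iUnion_cubeSet n i₀ ψ (hpos i₀) Q₀ (hεIoo k)
  have hμ := MeasureTheory.Measure.hausdorffMeasure_le_liminf_tsum s
    (Set.pi Set.univ fun i => EsetApprox (ψ i)) r hr Cov
    (Eventually.of_forall fun k => hdiam k) (Eventually.of_forall hcover)
  have hsummable : Summable (fun q : ℕ => (q:ℝ)^(1 - lam * (s - ((n:ℝ) - 1)))) :=
    Real.summable_nat_rpow.2 (by nlinarith)
  set B := ∑' q : ℕ, ENNReal.ofReal ((q:ℝ)^(1 - lam * (s - ((n:ℝ) - 1)))) with hBdef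
  have hB : B ≠ ⊤ := by
    rw [hBdef, ← ENNReal.ofReal_tsum_of_nonneg
      (fun q => Real.rpow_nonneg (Nat.cast_nonneg q) _) hsummable]
    exact ENNReal.ofReal_ne_top
  have hsum : ∀ k, (∑' idx : RIdx n i₀, EMetric.diam (Cov k idx) ^ s) ≤
      ENNReal.ofReal ((8 * 2 ^ (n-1)) * (ε k) ^ (s - ((n:ℝ) - 1))) * B := by
    intro k
    exact tsum_cubeSet_le n hn i₀ (ψ i₀) Q₀ hQ₀1 hψposN hψ1 lam hψq (hεIoo k) ht hst
  have hG : Tendsto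
      (fun k => ENNReal.ofReal ((8 * 2 ^ (n-1)) * (ε k) ^ (s - ((n:ℝ) - 1))) * B)
      atTop (𝓝 0) := by
    have h1 : Tendsto (fun k => (ε k) ^ (s - ((n:ℝ) - 1))) atTop (𝓝 0) := by
      have hc : ContinuousAt (fun x : ℝ => x ^ (s - ((n:ℝ) - 1))) 0 :=
        Real.continuousAt_rpow_const 0 _ (Or.inr ht.le)
      have := hc.tendsto.comp hεlim
      simpa [Function.comp_def, Real.zero_rpow ht.ne'] using this
    have h2 : Tendsto (fun k => (8 * 2 ^ (n-1) : ℝ) * (ε k) ^ (s - ((n:ℝ) - 1)))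
        atTop (𝓝 0) := by
      have := h1.const_mul (8 * 2 ^ (n-1) : ℝ)
      simpa using this
    have h3 := ENNReal.tendsto_ofReal h2
    rw [ENNReal.ofReal_zero] at h3
    have h4 := ENNReal.Tendsto.mul_const h3 (Or.inr hB)
    simpa using h4
  refine le_antisymm ?_ zero_le
  calc μH[s] (Set.pi Set.univ fun i => EsetApprox (ψ i))
      ≤ liminf (fun k => ∑' idx : RIdx n i₀, EMetric.diam (Cov k idx) ^ s) atTop := hμ
    _ ≤ liminf (fun k =>
          ENNReal.ofReal ((8 * 2 ^ (n-1)) * (ε k) ^ (s - ((n:ℝ) - 1))) * B) atTop :=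
        liminf_le_liminf (Eventually.of_forall hsum)
    _ = 0 := hG.liminf_eq

theorem stmt_3 (n : ℕ) (hn : 1 ≤ n) (ψ : Fin n → ℝ → ℝ)
    (hpos : ∀ i, ∀ x : ℝ, 0 < x → 0 < ψ i x)
    (hmono : ∀ i, ∀ x y : ℝ, 0 < x → x ≤ y → ψ i y ≤ ψ i x)
    (hlittle : ∀ i, (ψ i) =o[atTop] fun x : ℝ => (x ^ 2)⁻¹) :
    dimH (Set.pi Set.univ fun i => EsetApprox (ψ i)) ≤
      ⨅ i : Fin n, ENNReal.ofReal ((n : ℝ) - 1 + 2 / lamExp (ψ i)) := by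
  refine le_iInf fun i => ?_
  refine dimH_le fun d' hd' => ?_
  by_contra hlt
  push_neg at hlt
  have hreal : (n : ℝ) - 1 + 2 / lamExp (ψ i) < (d' : ℝ) := by
    by_contra h'
    push_neg at h'
    have : (d' : ℝ≥0∞) ≤ ENNReal.ofReal ((n : ℝ) - 1 + 2 / lamExp (ψ i)) := by
      rw [← ENNReal.ofReal_coe_nnreal]
      exact ENNReal.ofReal_le_ofReal h'
    exact absurd this (not_le.2 hlt)
  have := key n hn ψ hpos hmono hlittle i hreal
  rw [hd'] at this
  simp at this
end

section
/- Let ψ_1, …, ψ_n : ℝ_{>0} → ℝ_{>0} be functions for which there exists a positive integer Q₀ such that q²·ψ_l(q) < 1/1000 for all q ≥ Q₀ and all 1 ≤ l ≤ n. Then for any ball B ⊂ [0,1] of radius |B| and any integer Q satisfying Q ≥ max{10000·|B|^{−1}·log(1/|B|), 9Q₀}, there exist at least ⌊|B|·Q²/80⌋ rational numbers p_i/q_i contained in B such that: (1) for each i, Q/9 ≤ q_i ≤ Q and gcd(p_i, q_i) = 1; and (2) for every integer k ≥ 1, every 1 ≤ l ≤ n, and every pair of distinct indices i ≠ j, the interval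 C_k(p_i/q_i, ψ_l) is contained in B and the distance between C_k(p_i/q_i, ψ_l) and C_k(p_j/q_j, ψ_l) is greater than 1/(2Q²). -/
open MeasureTheory Filter
open scoped ENNReal Topology

/-- `C_k(p/q, ψ) = {x ∈ [0,1] : (1 - 2⁻ᵏ)·ψ(q) < x - p/q < ψ(q)}`. -/
noncomputable def Ckset (k : ℕ) (ψ : ℝ → ℝ) (p : ℤ) (q : ℕ) : Set ℝ :=
  {x ∈ Set.Icc (0:ℝ) 1 |
    (1 - (2:ℝ) ^ (-(k:ℤ))) * ψ q < x - p / q ∧ x - p / q < ψ q}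

/-- Distance between two sets of reals: `inf {|x - y| : x ∈ I, y ∈ J}`. -/
noncomputable def setDist (I J : Set ℝ) : ℝ :=
  sInf (Set.image2 (fun x y => |x - y|) I J)

-- harmonic lemma
lemma harmonic_le_log (m : ℕ) : ∑ q ∈ Finset.Icc 1 m, (1:ℝ)/q ≤ 1 + Real.log m := by
  induction m with
  | zero => simp
  | succ m ih =>
    rw [Finset.sum_Icc_succ_top (by omega : 1 ≤ m + 1)]
    rcases Nat.eq_zero_or_pos m with hm | hm
    · subst hm; simp
    · have h1 : Real.log ((m:ℝ)/(m+1)) ≤ (m:ℝ)/(m+1) - 1 :=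
        Real.log_le_sub_one_of_pos (by positivity)
      have h2 : Real.log ((m:ℝ)/(m+1)) = Real.log m - Real.log (m+1) :=
        Real.log_div (by positivity) (by positivity)
      have h3 : (1:ℝ)/(m+1) ≤ Real.log (m+1) - Real.log m := by
        have : (m:ℝ)/(m+1) - 1 = -(1/(m+1)) := by field_simp; ring
        rw [this, h2] at h1; linarith
      have : ((m:ℕ):ℝ) + 1 = ((m+1:ℕ):ℝ) := by push_cast; ring
      calc ∑ q ∈ Finset.Icc 1 m, (1:ℝ)/q + 1/(m+1:ℕ)
          ≤ (1 + Real.log m) + (Real.log (m+1) - Real.log m) := by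
            push_cast; push_cast at ih h3; linarith
        _ = 1 + Real.log ((m:ℝ)+1) := by ring
        _ = 1 + Real.log ((m+1:ℕ):ℝ) := by norm_cast
lemma frac_spacing {p p' : ℤ} {q q' : ℕ} (hq : 0 < q) (hq' : 0 < q')
    (hg : Int.gcd p q = 1) (hg' : Int.gcd p' q' = 1) (hne : (p, q) ≠ (p', q')) :
    1/((q:ℝ)*q') ≤ |(p:ℝ)/q - (p':ℝ)/q'| := by
  have hqz : (q:ℝ) ≠ 0 := by positivity
  have hq'z : (q':ℝ) ≠ 0 := by positivity
  have hcross : p * (q':ℤ) ≠ p' * (q:ℤ) := by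
    intro h
    apply hne
    have hco : IsCoprime p (q:ℤ) := Int.isCoprime_iff_gcd_eq_one.mpr hg
    have hco' : IsCoprime p' (q':ℤ) := Int.isCoprime_iff_gcd_eq_one.mpr hg'
    have hdvd : (q:ℤ) ∣ (q':ℤ) := by
      have h1 : (q:ℤ) ∣ p * q' := ⟨p', by linarith⟩
      exact (hco.symm.dvd_of_dvd_mul_left h1)
    have hdvd' : (q':ℤ) ∣ (q:ℤ) := by
      have h1 : (q':ℤ) ∣ p' * q := ⟨p, by linarith⟩
      exact (hco'.symm.dvd_of_dvd_mul_left h1)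
    have hqq : (q:ℤ) = q' := Int.dvd_antisymm (by positivity) (by positivity) hdvd hdvd'
    have hq2 : q = q' := by exact_mod_cast hqq
    subst hq2
    have hp : p = p' := by
      have hz : (q:ℤ) ≠ 0 := by positivity
      exact mul_right_cancel₀ hz (by linarith)
    simp [hp]
  have h1 : (1:ℤ) ≤ |p * q' - p' * q| := by
    exact Int.one_le_abs (sub_ne_zero.mpr hcross)
  have h1R : (1:ℝ) ≤ |(p:ℝ) * q' - (p':ℝ) * q| := by
    have h2 : ((1:ℤ):ℝ) ≤ ((|p * q' - p' * q| : ℤ) : ℝ) := by exact_mod_cast h1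
    rw [Int.cast_abs] at h2
    push_cast at h2
    convert h2 using 2
  have heq : |(p:ℝ)/q - (p':ℝ)/q'| = |(p:ℝ) * q' - (p':ℝ) * q| / (q * q') := by
    rw [← abs_of_pos (show (0:ℝ) < (q:ℝ)*q' from by positivity), ← abs_div]
    congr 1
    field_simp
  rw [heq, le_div_iff₀ (by positivity)]
  calc 1/((q:ℝ)*q') * (q * q') = 1 := by field_simp
    _ ≤ |(p:ℝ) * q' - (p':ℝ) * q| := h1R

noncomputable def Pq (a b : ℝ) (q : ℕ) : Finset ℤ := Finset.Icc ⌈a*(q:ℝ)⌉ ⌊b*(q:ℝ)⌋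
noncomputable def Pcq (a b : ℝ) (q : ℕ) : Finset ℤ :=
  (Pq a b q).filter (fun p => Int.gcd p q = 1)

lemma double_count (a b : ℝ) (Q : ℕ) :
    ∑ q ∈ Finset.Icc 1 Q, (Pq a b q).card ≤
    ∑ q ∈ Finset.Icc 1 Q, (Pcq a b q).card * (Q / q) := by
  classical
  have hA : ∑ q ∈ Finset.Icc 1 Q, (Pq a b q).card =
      ((Finset.Icc 1 Q).sigma (fun q => Pq a b q)).card := (Finset.card_sigma _ _).symm
  have hB : ∑ q ∈ Finset.Icc 1 Q, (Pcq a b q).card * (Q / q) =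
      ((Finset.Icc 1 Q).sigma (fun q => Pcq a b q ×ˢ Finset.Icc 1 (Q / q))).card := by
    rw [Finset.card_sigma]
    apply Finset.sum_congr rfl
    intro q _
    rw [Finset.card_product, Nat.card_Icc, Nat.add_sub_cancel]
  rw [hA, hB]
  apply Finset.card_le_card_of_injOn
    (fun x => ⟨x.1 / Int.gcd x.2 x.1, (x.2 / (Int.gcd x.2 x.1 : ℤ), Int.gcd x.2 x.1)⟩)
  · rintro ⟨q, p⟩ hx
    simp only [Finset.mem_coe, Finset.mem_sigma, Finset.mem_Icc] at hx
    obtain ⟨⟨hq1, hqQ⟩, hp⟩ := hx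
    set g := Int.gcd p (q:ℤ) with hgdef
    have hq0 : 0 < q := hq1
    have hg0 : 0 < g := by
      rw [hgdef, Int.gcd_pos_iff]
      right
      exact_mod_cast hq0.ne'
    have hgq : g ∣ q := by
      have h := (Int.gcd_dvd_right _ _ : (g:ℤ) ∣ (q:ℤ))
      exact_mod_cast h
    have hgp : (g:ℤ) ∣ p := Int.gcd_dvd_left _ _
    have hq'1 : 1 ≤ q / g := (Nat.one_le_div_iff hg0).mpr (Nat.le_of_dvd hq0 hgq)
    have hq'Q : q / g ≤ Q := le_trans (Nat.div_le_self _ _) hqQ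
    have hqeq : (q / g) * g = q := Nat.div_mul_cancel hgq
    have hpeq : (p / (g:ℤ)) * g = p := Int.ediv_mul_cancel hgp
    have hqR : (0:ℝ) < (q:ℝ) := by exact_mod_cast hq0
    have hq'R : (0:ℝ) < ((q / g : ℕ) : ℝ) := by exact_mod_cast hq'1
    have e1 : ((p / (g:ℤ) : ℤ) : ℝ) * (g:ℝ) = (p:ℝ) := by exact_mod_cast hpeq
    have e2 : (((q / g : ℕ)) : ℝ) * (g:ℝ) = (q:ℝ) := by exact_mod_cast hqeq
    have hfrac : ((p / (g:ℤ) : ℤ) : ℝ) / ((q / g : ℕ) : ℝ) = (p:ℝ) / (q:ℝ) := by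
      rw [div_eq_div_iff hq'R.ne' hqR.ne']
      rw [← e1, ← e2]
      ring
    unfold Pq at hp
    rw [Finset.mem_Icc] at hp
    have hab1 : a * q ≤ p := Int.ceil_le.mp hp.1
    have hab2 : (p:ℝ) ≤ b * q := Int.le_floor.mp hp.2
    have ha : a ≤ (p:ℝ) / q := (le_div_iff₀ hqR).mpr hab1
    have hb : (p:ℝ) / q ≤ b := (div_le_iff₀ hqR).mpr hab2
    rw [Finset.mem_coe]
    refine Finset.mem_sigma.mpr ⟨Finset.mem_Icc.mpr ⟨hq'1, hq'Q⟩,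
      Finset.mem_product.mpr ⟨?_, Finset.mem_Icc.mpr ⟨hg0, ?_⟩⟩⟩
    · unfold Pcq Pq
      rw [Finset.mem_filter, Finset.mem_Icc]
      refine ⟨⟨?_, ?_⟩, ?_⟩
      · rw [Int.ceil_le]
        calc a * ((q / g : ℕ) : ℝ)
            ≤ (((p / (g:ℤ) : ℤ) : ℝ) / ((q / g : ℕ) : ℝ)) * ((q / g : ℕ) : ℝ) := by
              apply mul_le_mul_of_nonneg_right _ hq'R.le
              rw [hfrac]; exact ha
          _ = ((p / (g:ℤ) : ℤ) : ℝ) := by field_simp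
      · rw [Int.le_floor]
        calc ((p / (g:ℤ) : ℤ) : ℝ)
            = (((p / (g:ℤ) : ℤ) : ℝ) / ((q / g : ℕ) : ℝ)) * ((q / g : ℕ) : ℝ) := by field_simp
          _ ≤ b * ((q / g : ℕ) : ℝ) := by
              apply mul_le_mul_of_nonneg_right _ hq'R.le
              rw [hfrac]; exact hb
      · have h := Int.gcd_div_gcd_div_gcd (i := p) (j := (q:ℤ)) (by exact_mod_cast hg0)
        have hcast : ((q / g : ℕ) : ℤ) = (q:ℤ) / (g:ℤ) := by
          refine (Int.ediv_eq_of_eq_mul_left (by exact_mod_cast hg0.ne') ?_).symm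
          exact_mod_cast hqeq.symm
        rw [hcast]
        exact h
    · rw [Nat.le_div_iff_mul_le hq'1]
      calc g * (q / g) = q := by rw [mul_comm]; exact hqeq
        _ ≤ Q := hqQ
  · rintro ⟨q, p⟩ hx ⟨q', p'⟩ hx' heq
    simp only [Sigma.mk.inj_iff, Prod.mk.injEq, heq_eq_eq] at heq
    obtain ⟨h1, h2, h3⟩ := heq
    have hgq : Int.gcd p (q:ℤ) ∣ q := by
      have h := (Int.gcd_dvd_right _ _ : (Int.gcd p (q:ℤ) :ℤ) ∣ (q:ℤ))
      exact_mod_cast h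
    have hgq' : Int.gcd p' (q':ℤ) ∣ q' := by
      have h := (Int.gcd_dvd_right _ _ : (Int.gcd p' (q':ℤ) :ℤ) ∣ (q':ℤ))
      exact_mod_cast h
    have hgp : (Int.gcd p (q:ℤ) : ℤ) ∣ p := Int.gcd_dvd_left _ _
    have hgp' : (Int.gcd p' (q':ℤ) : ℤ) ∣ p' := Int.gcd_dvd_left _ _
    have hq : q = q' := by
      have e1 := Nat.div_mul_cancel hgq
      have e2 := Nat.div_mul_cancel hgq'
      rw [← e1, ← e2, h1, h3]
    subst hq
    have hp : p = p' := by
      have e1 := Int.ediv_mul_cancel hgp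
      have e2 := Int.ediv_mul_cancel hgp'
      rw [← e1, ← e2, h2, h3]
    simp [hp]

lemma Pq_card_lower (a b : ℝ) (q : ℕ) : (b - a) * q - 1 ≤ ((Pq a b q).card : ℝ) := by
  unfold Pq
  rw [Int.card_Icc]
  have h1 : ((⌊b*(q:ℝ)⌋ + 1 - ⌈a*(q:ℝ)⌉ : ℤ) : ℝ) ≤ ((⌊b*(q:ℝ)⌋ + 1 - ⌈a*(q:ℝ)⌉).toNat : ℝ) := by
    exact_mod_cast Int.self_le_toNat _
  have h2 : (b*(q:ℝ)) - 1 < (⌊b*(q:ℝ)⌋ : ℝ) := Int.sub_one_lt_floor _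
  have h3 : (⌈a*(q:ℝ)⌉ : ℝ) < a*(q:ℝ) + 1 := Int.ceil_lt_add_one _
  have : ((⌊b*(q:ℝ)⌋ + 1 - ⌈a*(q:ℝ)⌉ : ℤ) : ℝ) = (⌊b*(q:ℝ)⌋:ℝ) + 1 - (⌈a*(q:ℝ)⌉:ℝ) := by
    push_cast; ring
  nlinarith [h1, h2, h3]

lemma Pq_card_upper' (a b : ℝ) (hab : a ≤ b) (q : ℕ) : ((Pq a b q).card : ℝ) ≤ (b - a) * q + 1 := by
  unfold Pq
  rw [Int.card_Icc]
  have hmax : (((⌊b*(q:ℝ)⌋ + 1 - ⌈a*(q:ℝ)⌉).toNat : ℤ) : ℝ) = max ((⌊b*(q:ℝ)⌋:ℝ) + 1 - (⌈a*(q:ℝ)⌉:ℝ)) 0 := by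
    rw [Int.toNat_eq_max]
    push_cast
    rfl
  have h2 : (⌊b*(q:ℝ)⌋ : ℝ) ≤ b*(q:ℝ) := Int.floor_le _
  have h3 : a*(q:ℝ) ≤ (⌈a*(q:ℝ)⌉ : ℝ) := Int.le_ceil _
  have hnn : (0:ℝ) ≤ (b-a)*q + 1 := by
    have : (0:ℝ) ≤ (b-a)*q := mul_nonneg (by linarith) (by positivity)
    linarith
  have : (((⌊b*(q:ℝ)⌋ + 1 - ⌈a*(q:ℝ)⌉).toNat : ℤ) : ℝ) = (((⌊b*(q:ℝ)⌋ + 1 - ⌈a*(q:ℝ)⌉).toNat : ℕ) : ℝ) := by push_cast; rfl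
  rw [← this, hmax]
  apply max_le _ hnn
  nlinarith

lemma sum_Icc_id_real (m : ℕ) : ∑ q ∈ Finset.Icc 1 m, (q:ℝ) = m*(m+1)/2 := by
  induction m with
  | zero => simp
  | succ m ih => rw [Finset.sum_Icc_succ_top (by omega : 1 ≤ m+1), ih]; push_cast; ring

lemma log_le_div41 (u : ℝ) (hu : 6931 ≤ u) : Real.log u ≤ u / 41 := by
  have h1 : Real.log (Real.sqrt u) ≤ Real.sqrt u - 1 :=
    Real.log_le_sub_one_of_pos (Real.sqrt_pos.mpr (by linarith))
  have h2 : Real.log (Real.sqrt u) = Real.log u / 2 := Real.log_sqrt (by linarith)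
  have h3 : (83:ℝ) ≤ Real.sqrt u := by
    rw [show (83:ℝ) = Real.sqrt (83^2) from (Real.sqrt_sq (by norm_num)).symm]
    exact Real.sqrt_le_sqrt (by norm_num; linarith)
  have h4 : Real.sqrt u * Real.sqrt u = u := Real.mul_self_sqrt (by linarith)
  nlinarith

lemma Pq_mem_bounds {a b : ℝ} {p : ℤ} {q : ℕ} (hq : 0 < q) (hp : p ∈ Pq a b q) :
    a ≤ (p:ℝ)/q ∧ (p:ℝ)/q ≤ b := by
  unfold Pq at hp
  rw [Finset.mem_Icc] at hp
  have hqR : (0:ℝ) < q := by exact_mod_cast hq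
  have h1 : a * q ≤ p := Int.ceil_le.mp hp.1
  have h2 : (p:ℝ) ≤ b * q := Int.le_floor.mp hp.2
  exact ⟨(le_div_iff₀ hqR).mpr h1, (div_le_iff₀ hqR).mpr h2⟩

set_option maxHeartbeats 2000000 in
theorem stmt_6 (n : ℕ) (ψ : Fin n → ℝ → ℝ)
    (hpos : ∀ i, ∀ x : ℝ, 0 < x → 0 < ψ i x)
    (Q₀ : ℕ) (hQ₀ : 0 < Q₀)
    (hsmall : ∀ i, ∀ q : ℕ, Q₀ ≤ q → (q : ℝ) ^ 2 * ψ i q < 1 / 1000)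
    (x₀ r : ℝ) (hr : 0 < r) (hB : Metric.ball x₀ r ⊆ Set.Icc (0:ℝ) 1)
    (Q : ℕ) (hQ1 : 10000 * r⁻¹ * Real.log (1 / r) ≤ (Q : ℝ)) (hQ2 : 9 * Q₀ ≤ Q) :
    ∃ S : Finset (ℤ × ℕ),
      (⌊r * (Q : ℝ) ^ 2 / 80⌋ ≤ (S.card : ℤ)) ∧
      (∀ pq ∈ S, ((pq.1 : ℝ) / (pq.2 : ℝ)) ∈ Metric.ball x₀ r) ∧
      (∀ pq ∈ S, (Q : ℝ) / 9 ≤ (pq.2 : ℝ) ∧ pq.2 ≤ Q ∧ Int.gcd pq.1 (pq.2 : ℤ) = 1) ∧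
      (∀ k : ℕ, 1 ≤ k → ∀ i : Fin n, ∀ pq ∈ S,
        Ckset k (ψ i) pq.1 pq.2 ⊆ Metric.ball x₀ r) ∧
      (∀ k : ℕ, 1 ≤ k → ∀ i : Fin n, ∀ pq ∈ S, ∀ pq' ∈ S, pq ≠ pq' →
        1 / (2 * (Q : ℝ) ^ 2) < setDist (Ckset k (ψ i) pq.1 pq.2) (Ckset k (ψ i) pq'.1 pq'.2)) := by
  classical
  have hQ9 : 9 ≤ Q := by omega
  have hQR : (9:ℝ) ≤ (Q:ℝ) := by exact_mod_cast hQ9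
  have hQpos : (0:ℝ) < Q := by linarith
  have hQne : (Q:ℝ) ≠ 0 := hQpos.ne'
  have hB' : Metric.closedBall x₀ r ⊆ Set.Icc (0:ℝ) 1 := by
    rw [← closure_ball x₀ hr.ne']
    exact closure_minimal hB isClosed_Icc
  have hx1 : 0 ≤ x₀ - r := by
    have h1 := hB' (show x₀ - r ∈ Metric.closedBall x₀ r by
      simp [Metric.mem_closedBall, Real.dist_eq]; rw [abs_le]; constructor <;> linarith)
    exact h1.1
  have hx2 : x₀ + r ≤ 1 := by
    have h2 := hB' (show x₀ + r ∈ Metric.closedBall x₀ r by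
      simp [Metric.mem_closedBall, Real.dist_eq]; rw [abs_le]; constructor <;> linarith)
    exact h2.2
  have hr2 : r ≤ 1/2 := by linarith
  have hlogr : 0.6931 ≤ Real.log (1/r) := by
    have h2 : (2:ℝ) ≤ 1/r := by rw [le_div_iff₀ hr]; linarith
    have h3 := Real.log_le_log (by norm_num : (0:ℝ) < 2) h2
    have h4 := Real.log_two_gt_d9
    linarith
  have hu0 : 10000 * Real.log (1/r) ≤ r * Q := by
    have h := mul_le_mul_of_nonneg_left hQ1 hr.le
    calc 10000 * Real.log (1/r) = r * (10000 * r⁻¹ * Real.log (1/r)) := by field_simp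
      _ ≤ r * Q := h
  have hu : 6931 ≤ r * (Q:ℝ) := by linarith
  have hrQ : 1/(Q:ℝ) ≤ r := by rw [div_le_iff₀ hQpos]; nlinarith
  set a := x₀ - r + 1/(Q:ℝ) with ha
  set b := x₀ + r - 1/(Q:ℝ) with hb
  have hba : b - a = 2*r - 2/(Q:ℝ) := by rw [ha, hb]; ring
  have hab : a ≤ b := by
    have : (0:ℝ) < 1/(Q:ℝ) := by positivity
    rw [ha, hb]; linarith
  set q₁ := Q / 9 with hq₁
  have hq₁1 : 1 ≤ q₁ := by omega
  have hq₁Q : q₁ ≤ Q := by omega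
  have hQ9q : Q < 9 * (q₁ + 1) := by omega
  set T := Finset.Ioc q₁ Q with hT
  set S := T.biUnion (fun q => (Pcq a b q).image (fun p => (p, q))) with hS
  -- facts about q ∈ T
  have hTfact : ∀ q ∈ T, 0 < q ∧ q ≤ Q ∧ Q₀ ≤ q ∧ (Q:ℝ) < 9 * q := by
    intro q hq
    rw [hT, Finset.mem_Ioc] at hq
    have h9 : Q < 9 * q := by omega
    refine ⟨by omega, hq.2, by omega, by exact_mod_cast h9⟩
  -- membership in S
  have hSmem : ∀ pq ∈ S, pq.2 ∈ T ∧ pq.1 ∈ Pcq a b pq.2 := by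
    intro pq h
    rw [hS, Finset.mem_biUnion] at h
    obtain ⟨q, hq, hmem⟩ := h
    rw [Finset.mem_image] at hmem
    obtain ⟨p, hp, rfl⟩ := hmem
    exact ⟨hq, hp⟩
  have hfr : ∀ pq ∈ S, a ≤ (pq.1:ℝ)/pq.2 ∧ (pq.1:ℝ)/pq.2 ≤ b ∧ Int.gcd pq.1 (pq.2:ℤ) = 1 := by
    intro pq h
    obtain ⟨hqT, hp⟩ := hSmem pq h
    obtain ⟨hq0, -, -, -⟩ := hTfact _ hqT
    rw [Pcq, Finset.mem_filter] at hp
    have hbd := Pq_mem_bounds hq0 hp.1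
    exact ⟨hbd.1, hbd.2, hp.2⟩
  -- ψ bounds
  have hψf : ∀ (i : Fin n), ∀ q ∈ T, 0 < ψ i q ∧ ψ i q < 81/(1000*(Q:ℝ)^2) := by
    intro i q hqT
    obtain ⟨hq0, hqQ, hQ₀q, h9q⟩ := hTfact q hqT
    have hqR : (0:ℝ) < q := by exact_mod_cast hq0
    have hψ0 : 0 < ψ i q := hpos i q hqR
    have hsm := hsmall i q hQ₀q
    refine ⟨hψ0, ?_⟩
    have h1 : ψ i q < 1/(1000*(q:ℝ)^2) := by
      rw [lt_div_iff₀ (by positivity)]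
      nlinarith
    have h2 : 1/(1000*(q:ℝ)^2) ≤ 81/(1000*(Q:ℝ)^2) := by
      rw [div_le_div_iff₀ (by positivity) (by positivity)]
      nlinarith
    linarith
  have h81 : 81/(1000*(Q:ℝ)^2) ≤ 1/(Q:ℝ) := by
    rw [div_le_div_iff₀ (by positivity) (by positivity)]
    nlinarith
  -- Ckset facts
  have hCk : ∀ k : ℕ, 1 ≤ k → ∀ i : Fin n, ∀ pq ∈ S,
      (Ckset k (ψ i) pq.1 pq.2 ⊆ Metric.ball x₀ r) ∧
      (Ckset k (ψ i) pq.1 pq.2).Nonempty ∧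
      (∀ x ∈ Ckset k (ψ i) pq.1 pq.2,
        0 < x - (pq.1:ℝ)/pq.2 ∧ x - (pq.1:ℝ)/pq.2 < 81/(1000*(Q:ℝ)^2)) := by
    intro k hk i pq hpq
    obtain ⟨hqT, hpmem⟩ := hSmem pq hpq
    obtain ⟨haf, hbf, hgcd⟩ := hfr pq hpq
    obtain ⟨hψ0, hψ81⟩ := hψf i pq.2 hqT
    have he0 : (0:ℝ) < (2:ℝ)^(-(k:ℤ)) := by positivity
    have he2 : (2:ℝ)^(-(k:ℤ)) ≤ 1/2 := by
      calc (2:ℝ)^(-(k:ℤ)) ≤ (2:ℝ)^(-1:ℤ) := zpow_le_zpow_right₀ (by norm_num) (by omega)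
        _ = 1/2 := by norm_num
    have hdist : |(pq.1:ℝ)/pq.2 - x₀| ≤ r - 1/(Q:ℝ) := by
      rw [abs_le]
      rw [ha] at haf; rw [hb] at hbf
      constructor <;> linarith
    have hψQ : ψ i pq.2 < 1/(Q:ℝ) := lt_of_lt_of_le hψ81 h81
    have hdisp : ∀ x ∈ Ckset k (ψ i) pq.1 pq.2,
        0 < x - (pq.1:ℝ)/pq.2 ∧ x - (pq.1:ℝ)/pq.2 < 81/(1000*(Q:ℝ)^2) := by
      intro x hx
      obtain ⟨hxI, hx1, hx2⟩ := hx
      have hprod : 0 < (1 - (2:ℝ)^(-(k:ℤ))) * ψ i pq.2 := mul_pos (by linarith) hψ0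
      exact ⟨by linarith, by linarith⟩
    rw [abs_le] at hdist
    refine ⟨?_, ?_, hdisp⟩
    · intro x hx
      obtain ⟨h0, h1⟩ := hdisp x hx
      rw [Metric.mem_ball, Real.dist_eq, abs_lt]
      constructor <;> linarith
    · refine ⟨(pq.1:ℝ)/pq.2 + (1 - (2:ℝ)^(-(k:ℤ))/2) * ψ i pq.2, ?_, ?_, ?_⟩
      · apply hB
        rw [Metric.mem_ball, Real.dist_eq, abs_lt]
        have h5 : 0 < (1 - (2:ℝ)^(-(k:ℤ))/2) * ψ i pq.2 := mul_pos (by linarith) hψ0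
        have h6 : ((2:ℝ)^(-(k:ℤ))/2) * ψ i pq.2 ≥ 0 := mul_nonneg (by linarith) hψ0.le
        have h7 : (1 - (2:ℝ)^(-(k:ℤ))/2) * ψ i pq.2 ≤ ψ i pq.2 := by nlinarith
        constructor <;> linarith
      · have he : ((pq.1:ℝ)/pq.2 + (1 - (2:ℝ)^(-(k:ℤ))/2) * ψ i pq.2) - (pq.1:ℝ)/pq.2
            = (1 - (2:ℝ)^(-(k:ℤ))/2) * ψ i pq.2 := by ring
        rw [he]
        have h8 : ((2:ℝ)^(-(k:ℤ))/2) * ψ i pq.2 < (2:ℝ)^(-(k:ℤ)) * ψ i pq.2 := by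
          apply mul_lt_mul_of_pos_right (by linarith) hψ0
        nlinarith
      · have he : ((pq.1:ℝ)/pq.2 + (1 - (2:ℝ)^(-(k:ℤ))/2) * ψ i pq.2) - (pq.1:ℝ)/pq.2
            = (1 - (2:ℝ)^(-(k:ℤ))/2) * ψ i pq.2 := by ring
        rw [he]
        have h9 : 0 < ((2:ℝ)^(-(k:ℤ))/2) * ψ i pq.2 := mul_pos (by linarith) hψ0
        nlinarith
  -- cardinality of S
  have hScard : S.card = ∑ q ∈ T, (Pcq a b q).card := by
    rw [hS, Finset.card_biUnion]
    · apply Finset.sum_congr rfl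
      intro q _
      exact Finset.card_image_of_injective _ (fun x y h => (Prod.ext_iff.mp h).1)
    · intro q hq q' hq' hne
      rw [Function.onFun, Finset.disjoint_left]
      intro x h1 h2
      rw [Finset.mem_image] at h1 h2
      obtain ⟨p1, -, e1⟩ := h1
      obtain ⟨p2, -, e2⟩ := h2
      apply hne
      have := congrArg Prod.snd (e1.trans e2.symm)
      simpa using this
  set N := ∑ q ∈ Finset.Icc 1 Q, (Pq a b q).card with hN
  have hNlow : (b-a)*((Q:ℝ)*((Q:ℝ)+1)/2) - Q ≤ (N:ℝ) := by
    have h1 : ∑ q ∈ Finset.Icc 1 Q, ((b-a)*(q:ℝ) - 1) ≤ ∑ q ∈ Finset.Icc 1 Q, ((Pq a b q).card:ℝ) :=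
      Finset.sum_le_sum (fun q _ => Pq_card_lower a b q)
    have h2 : ∑ q ∈ Finset.Icc 1 Q, ((b-a)*(q:ℝ) - 1) = (b-a)*((Q:ℝ)*((Q:ℝ)+1)/2) - Q := by
      rw [Finset.sum_sub_distrib, ← Finset.mul_sum, sum_Icc_id_real]
      simp [Nat.card_Icc]
    have h3 : (N:ℝ) = ∑ q ∈ Finset.Icc 1 Q, ((Pq a b q).card:ℝ) := by
      rw [hN]; push_cast; rfl
    rw [h3]; linarith
  have hsplit : Finset.Icc 1 Q = Finset.Icc 1 q₁ ∪ T := by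
    rw [hT]; ext x; simp only [Finset.mem_Icc, Finset.mem_union, Finset.mem_Ioc]; omega
  have hdisj : Disjoint (Finset.Icc 1 q₁) T := by
    rw [hT, Finset.disjoint_left]
    intro x h1 h2
    rw [Finset.mem_Icc] at h1
    rw [Finset.mem_Ioc] at h2
    omega
  have hNsplit : N ≤ (∑ q ∈ Finset.Icc 1 q₁, (Pcq a b q).card * (Q/q))
      + (∑ q ∈ T, (Pcq a b q).card * (Q/q)) := by
    calc N ≤ ∑ q ∈ Finset.Icc 1 Q, (Pcq a b q).card * (Q/q) := double_count a b Q
      _ = _ := by rw [hsplit, Finset.sum_union hdisj]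
  have hmid : (↑(∑ q ∈ Finset.Icc 1 q₁, (Pcq a b q).card * (Q/q)) : ℝ)
      ≤ (q₁:ℝ)*((b-a)*(Q:ℝ)) + (Q:ℝ)*(1 + Real.log Q) := by
    push_cast
    have hterm : ∀ q ∈ Finset.Icc 1 q₁, ((Pcq a b q).card : ℝ) * ((Q/q : ℕ):ℝ)
        ≤ (b-a)*(Q:ℝ) + (Q:ℝ)*(1/(q:ℝ)) := by
      intro q hq
      rw [Finset.mem_Icc] at hq
      have hq0R : (0:ℝ) < q := by exact_mod_cast hq.1
      have h1 : ((Pcq a b q).card : ℝ) ≤ (b-a)*q + 1 := by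
        refine le_trans ?_ (Pq_card_upper' a b hab q)
        exact_mod_cast Finset.card_le_card (Finset.filter_subset _ _)
      have h2 : ((Q/q : ℕ):ℝ) ≤ (Q:ℝ)/q := Nat.cast_div_le
      have h3 : ((Pcq a b q).card : ℝ) * ((Q/q : ℕ):ℝ) ≤ ((b-a)*q + 1) * ((Q:ℝ)/q) := by
        apply mul_le_mul h1 h2 (by positivity)
        nlinarith
      calc ((Pcq a b q).card : ℝ) * ((Q/q : ℕ):ℝ) ≤ ((b-a)*q + 1) * ((Q:ℝ)/q) := h3
        _ = (b-a)*(Q:ℝ) + (Q:ℝ)*(1/(q:ℝ)) := by field_simp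
    calc ∑ q ∈ Finset.Icc 1 q₁, ((Pcq a b q).card : ℝ) * ((Q/q : ℕ):ℝ)
        ≤ ∑ q ∈ Finset.Icc 1 q₁, ((b-a)*(Q:ℝ) + (Q:ℝ)*(1/(q:ℝ))) := Finset.sum_le_sum hterm
      _ = (q₁:ℝ)*((b-a)*(Q:ℝ)) + (Q:ℝ) * ∑ q ∈ Finset.Icc 1 q₁, (1/(q:ℝ)) := by
          rw [Finset.sum_add_distrib, Finset.sum_const, ← Finset.mul_sum]
          simp [Nat.card_Icc]
      _ ≤ (q₁:ℝ)*((b-a)*(Q:ℝ)) + (Q:ℝ)*(1 + Real.log q₁) := by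
          have := harmonic_le_log q₁
          nlinarith
      _ ≤ (q₁:ℝ)*((b-a)*(Q:ℝ)) + (Q:ℝ)*(1 + Real.log Q) := by
          have hl : Real.log (q₁:ℝ) ≤ Real.log (Q:ℝ) := by
            apply Real.log_le_log (by exact_mod_cast hq₁1)
            exact_mod_cast hq₁Q
          nlinarith
  have hIoc : ∑ q ∈ T, (Pcq a b q).card * (Q/q) ≤ 8 * S.card := by
    rw [hScard, Finset.mul_sum]
    apply Finset.sum_le_sum
    intro q hq
    rw [hT, Finset.mem_Ioc] at hq
    have hq0 : 0 < q := by omega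
    have h9 : Q < 9 * q := by omega
    have hdiv : Q / q ≤ 8 := by
      have := (Nat.div_lt_iff_lt_mul hq0).mpr (by omega : Q < 9 * q)
      omega
    calc (Pcq a b q).card * (Q/q) ≤ (Pcq a b q).card * 8 :=
          Nat.mul_le_mul_left _ hdiv
      _ = 8 * (Pcq a b q).card := by ring
  -- main cardinality bound
  have hq1cast : ((q₁:ℕ):ℝ) ≤ (Q:ℝ)/9 := by
    rw [hq₁]
    calc ((Q/9 : ℕ):ℝ) ≤ (Q:ℝ)/(9:ℕ) := Nat.cast_div_le
      _ = (Q:ℝ)/9 := by norm_num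
  have hmain : r*(Q:ℝ)^2/80 ≤ (S.card : ℝ) := by
    have c0 : (0:ℝ) ≤ (S.card:ℝ) := by positivity
    have hioc : (↑(∑ q ∈ T, (Pcq a b q).card * (Q/q)):ℝ) ≤ 8*(S.card:ℝ) := by
      exact_mod_cast hIoc
    have hcastN : (N:ℝ) ≤ (↑(∑ q ∈ Finset.Icc 1 q₁, (Pcq a b q).card * (Q/q)) : ℝ)
        + (↑(∑ q ∈ T, (Pcq a b q).card * (Q/q)):ℝ) := by
      exact_mod_cast hNsplit
    have e1 : (N:ℝ) ≤ (q₁:ℝ)*((b-a)*(Q:ℝ)) + (Q:ℝ)*(1 + Real.log Q) + 8*(S.card:ℝ) := by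
      have h := hcastN.trans (add_le_add hmid hioc)
      linarith
    have hba0 : 0 ≤ (b-a)*(Q:ℝ) := by
      apply mul_nonneg _ hQpos.le
      linarith
    have e2 : (q₁:ℝ)*((b-a)*(Q:ℝ)) ≤ ((Q:ℝ)/9)*((b-a)*(Q:ℝ)) :=
      mul_le_mul_of_nonneg_right hq1cast hba0
    -- log bound
    have hlogu : Real.log (r*(Q:ℝ)) ≤ (r*(Q:ℝ))/41 := log_le_div41 _ hu
    have hlogQ : Real.log (Q:ℝ) ≤ (r*(Q:ℝ))/41 + (r*(Q:ℝ))/10000 := by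
      have hlq : Real.log (Q:ℝ) = Real.log (r*(Q:ℝ)) - Real.log r := by
        rw [← Real.log_div (by positivity) hr.ne']
        congr 1
        field_simp
      have hloginv : Real.log (1/r) = - Real.log r := by rw [one_div, Real.log_inv]
      rw [hlq]
      rw [hloginv] at hu0
      linarith
    -- algebraic identities
    have id1 : (b-a)*((Q:ℝ)*((Q:ℝ)+1)/2) - (Q:ℝ)
        = r*(Q:ℝ)*(Q:ℝ) + r*(Q:ℝ) - 2*(Q:ℝ) - 1 := by
      rw [hba]; field_simp; ring
    have id2 : ((Q:ℝ)/9)*((b-a)*(Q:ℝ)) = (2*(r*(Q:ℝ))*(Q:ℝ) - 2*(Q:ℝ))/9 := by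
      rw [hba]; field_simp
    -- products for nlinarith
    have p1 : (Q:ℝ) * Real.log (Q:ℝ) ≤ (Q:ℝ) * ((r*(Q:ℝ))/41 + (r*(Q:ℝ))/10000) :=
      mul_le_mul_of_nonneg_left hlogQ hQpos.le
    have p2 : 6931*(Q:ℝ) ≤ (r*(Q:ℝ))*(Q:ℝ) :=
      mul_le_mul_of_nonneg_right hu hQpos.le
    nlinarith [hNlow, e1, e2, p1, p2, c0, id1, id2]
  refine ⟨S, ?_, ?_, ?_, ?_, ?_⟩
  · have h1 : (⌊r*(Q:ℝ)^2/80⌋ : ℝ) ≤ (S.card:ℝ) := le_trans (Int.floor_le _) hmain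
    exact_mod_cast h1
  · intro pq h
    obtain ⟨haf, hbf, -⟩ := hfr pq h
    rw [Metric.mem_ball, Real.dist_eq, abs_lt]
    rw [ha] at haf; rw [hb] at hbf
    have : (0:ℝ) < 1/(Q:ℝ) := by positivity
    constructor <;> linarith
  · intro pq h
    obtain ⟨hq0, hqQ, -, h9q⟩ := hTfact _ (hSmem pq h).1
    obtain ⟨-, -, hg⟩ := hfr pq h
    refine ⟨?_, hqQ, hg⟩
    rw [div_le_iff₀ (by norm_num : (0:ℝ) < 9)]
    linarith
  · intro k hk i pq hpq
    exact (hCk k hk i pq hpq).1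
  · intro k hk i pq hpq pq' hpq' hne
    obtain ⟨-, hne1, hd1⟩ := hCk k hk i pq hpq
    obtain ⟨-, hne2, hd2⟩ := hCk k hk i pq' hpq'
    obtain ⟨-, -, hg⟩ := hfr pq hpq
    obtain ⟨-, -, hg'⟩ := hfr pq' hpq'
    obtain ⟨hq0, hqQ, -, -⟩ := hTfact _ (hSmem pq hpq).1
    obtain ⟨hq0', hqQ', -, -⟩ := hTfact _ (hSmem pq' hpq').1
    have hspace := frac_spacing hq0 hq0' hg hg' (fun hcon => hne (by
      have e1 : pq = (pq.1, pq.2) := rfl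
      have e2 : pq' = (pq'.1, pq'.2) := rfl
      rw [e1, e2, hcon]))
    have hq2R : (0:ℝ) < (pq.2:ℝ) := by exact_mod_cast hq0
    have hq2R' : (0:ℝ) < (pq'.2:ℝ) := by exact_mod_cast hq0'
    have hqQR : (pq.2:ℝ) ≤ Q := by exact_mod_cast hqQ
    have hqQR' : (pq'.2:ℝ) ≤ Q := by exact_mod_cast hqQ'
    have hQQ : 1/((Q:ℝ)^2) ≤ 1/((pq.2:ℝ)*pq'.2) := by
      rw [div_le_div_iff₀ (by positivity) (by positivity)]
      nlinarith
    have hlow : ∀ z ∈ Set.image2 (fun x y => |x - y|)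
        (Ckset k (ψ i) pq.1 pq.2) (Ckset k (ψ i) pq'.1 pq'.2), 9/(10*(Q:ℝ)^2) ≤ z := by
      rintro z ⟨x, hx, y, hy, rfl⟩
      obtain ⟨hx0, hx81⟩ := hd1 x hx
      obtain ⟨hy0, hy81⟩ := hd2 y hy
      have habs : |(pq.1:ℝ)/pq.2 - (pq'.1:ℝ)/pq'.2|
          ≤ |x - y| + |(x - (pq.1:ℝ)/pq.2) - (y - (pq'.1:ℝ)/pq'.2)| := by
        have he : (pq.1:ℝ)/pq.2 - (pq'.1:ℝ)/pq'.2
            = (x - y) - ((x - (pq.1:ℝ)/pq.2) - (y - (pq'.1:ℝ)/pq'.2)) := by ring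
        rw [he]
        exact abs_sub _ _
      have h2 : |(x - (pq.1:ℝ)/pq.2) - (y - (pq'.1:ℝ)/pq'.2)| ≤ 81/(1000*(Q:ℝ)^2) := by
        rw [abs_le]; constructor <;> linarith
      have hxy : 1/((Q:ℝ)^2) - 81/(1000*(Q:ℝ)^2) ≤ |x - y| := by linarith
      have hfin : 9/(10*(Q:ℝ)^2) ≤ 1/((Q:ℝ)^2) - 81/(1000*(Q:ℝ)^2) := by
        have hid : 1/((Q:ℝ)^2) - 81/(1000*(Q:ℝ)^2) = 919/(1000*(Q:ℝ)^2) := by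
          field_simp
          ring
        rw [hid, div_le_div_iff₀ (by positivity) (by positivity)]
        nlinarith
      linarith
    have hsInf : 9/(10*(Q:ℝ)^2) ≤ setDist (Ckset k (ψ i) pq.1 pq.2) (Ckset k (ψ i) pq'.1 pq'.2) :=
      le_csInf (Set.Nonempty.image2 hne1 hne2) hlow
    have hcmp : 1/(2*(Q:ℝ)^2) < 9/(10*(Q:ℝ)^2) := by
      rw [div_lt_div_iff₀ (by positivity) (by positivity)]
      nlinarith
    linarith
end
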